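/- Let X be a separable F-space and let A be a subset of the space of continuous linear operators on X such that: (1) A is a countable union of compact sets; (2) ⋂_{T∈A} HC(T) is nonempty; (3) there exists S ∈ A which commutes with every T ∈ A. Then ⋂_{T∈A} HC(T) is residual in X, i.e. it is a dense Gδ set. -/

import Mathlib

open Filter Topology Set
open scoped Pointwise Uniformity

section AuxHC



section Aux

variable {X : Type*} [AddCommGroup X] [Module ℝ X] [UniformSpace X]
    [IsUniformAddGroup X] [ContinuousSMul ℝ X]

/-- Banach–Steinhaus / equicontinuity for pointwise bounded families on a Baire TVS. -/
theorem aux_equicontinuous [BaireSpace X] {ι : Type*} (T : ι → X →L[ℝ] X)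
    (hb : ∀ x, Bornology.IsVonNBounded ℝ (Set.range fun i => T i x)) :
    Equicontinuous fun i => ⇑(T i) := by
  have key : ∀ W ∈ 𝓝 (0 : X), ∃ V ∈ 𝓝 (0 : X), ∀ i, ∀ x ∈ V, T i x ∈ W := by
    intro W hW
    obtain ⟨V₀, hV₀, hV₀W⟩ := exists_nhds_zero_half hW
    obtain ⟨U, ⟨hU, hUc, hUb⟩, hUV⟩ := (nhds_basis_closed_balanced ℝ X).mem_iff.1 hV₀
    set E : Set X := ⋂ i, T i ⁻¹' U with hE
    have hEc : IsClosed E := isClosed_iInter fun i => hUc.preimage (T i).continuous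
    have hcover : (⋃ n : ℕ, ((n : ℝ) + 1) • E) = Set.univ := by
      ext y
      simp only [Set.mem_univ, iff_true, Set.mem_iUnion]
      obtain ⟨r, hr⟩ := absorbs_iff_norm.1 ((hb y) hU)
      obtain ⟨n, hn⟩ := exists_nat_ge r
      have hc : ((n : ℝ) + 1) ≠ 0 := by positivity
      refine ⟨n, ?_⟩
      rw [Set.mem_smul_set_iff_inv_smul_mem₀ hc]
      refine Set.mem_iInter.2 fun i => ?_
      have h1 : Set.range (fun i => T i y) ⊆ ((n : ℝ) + 1) • U := by
        refine hr _ ?_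
        rw [Real.norm_eq_abs, abs_of_nonneg (by positivity)]
        linarith
      have h2 : T i y ∈ ((n : ℝ) + 1) • U := h1 ⟨i, rfl⟩
      rw [Set.mem_smul_set_iff_inv_smul_mem₀ hc] at h2
      simpa [Set.mem_preimage, map_smul] using h2
    obtain ⟨n, hne'⟩ :=
      nonempty_interior_of_iUnion_of_closed
        (fun n : ℕ => hEc.smul_of_ne_zero (by positivity : ((n : ℝ) + 1) ≠ 0)) hcover
    rw [interior_smul₀ (by positivity : ((n : ℝ) + 1) ≠ 0)] at hne'
    obtain ⟨y, x₀, hx₀, -⟩ := hne'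
    refine ⟨(fun v => v + x₀) ⁻¹' interior E, ?_, ?_⟩
    · refine (isOpen_interior.preimage (continuous_add_right x₀)).mem_nhds ?_
      simpa using hx₀
    · intro i v hv
      have h1 : T i (v + x₀) ∈ U := Set.mem_iInter.1 (interior_subset hv) i
      have h2 : T i x₀ ∈ U := Set.mem_iInter.1 (interior_subset hx₀) i
      have h3 : T i v = T i (v + x₀) + -(T i x₀) := by rw [map_add]; abel
      rw [h3]
      exact hV₀W _ (hUV h1) _ (hUV (hUb.neg_mem_iff.2 h2))
  apply equicontinuous_of_equicontinuousAt_zero T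
  intro U hU
  obtain ⟨V, hV, h⟩ := key (UniformSpace.ball (0 : X) U) (UniformSpace.ball_mem_nhds 0 hU)
  filter_upwards [hV] with v hv i
  have := h i v hv
  simpa [UniformSpace.ball, map_zero] using this

end Aux



section Aux2

variable {X : Type*} [AddCommGroup X] [Module ℝ X] [UniformSpace X]
    [IsUniformAddGroup X] [ContinuousSMul ℝ X]

/-- Joint continuity of evaluation on an equicontinuous set of operators. -/
theorem aux_evalCont {K : Set (X →L[ℝ] X)}
    (hK : Equicontinuous fun T : K => ⇑(T : X →L[ℝ] X)) :
    Continuous fun p : K × X => (p.1 : X →L[ℝ] X) p.2 := by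
  rw [continuous_iff_continuousAt]
  rintro ⟨T₀, x₀⟩
  have h2 : Tendsto (fun p : K × X => (p.1 : X →L[ℝ] X) x₀ - (T₀ : X →L[ℝ] X) x₀)
      (𝓝 (T₀, x₀)) (𝓝 0) := by
    have hc : Continuous fun p : K × X => (p.1 : X →L[ℝ] X) x₀ :=
      (continuous_eval_const x₀).comp (continuous_subtype_val.comp continuous_fst)
    have hc2 : Continuous fun p : K × X =>
        (p.1 : X →L[ℝ] X) x₀ - (T₀ : X →L[ℝ] X) x₀ := hc.sub continuous_const
    have := hc2.tendsto (T₀, x₀)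
    simpa only [sub_self] using this
  have h1 : Tendsto (fun p : K × X => (p.1 : X →L[ℝ] X) p.2 - (p.1 : X →L[ℝ] X) x₀)
      (𝓝 (T₀, x₀)) (𝓝 0) := by
    rw [Filter.tendsto_def]
    intro W hW
    have hU : {q : X × X | q.2 - q.1 ∈ W} ∈ 𝓤 X := by
      rw [uniformity_eq_comap_nhds_zero X]
      exact preimage_mem_comap hW
    have hev := hK x₀ _ hU
    have h' : ∀ᶠ p : K × X in 𝓝 (T₀, x₀),
        ∀ T : K, (T : X →L[ℝ] X) p.2 - (T : X →L[ℝ] X) x₀ ∈ W :=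
      (continuous_snd.tendsto (T₀, x₀)).eventually hev
    exact h'.mono fun p hp => hp p.1
  have h3 : Tendsto (fun p : K × X =>
      ((p.1 : X →L[ℝ] X) p.2 - (p.1 : X →L[ℝ] X) x₀) +
        ((p.1 : X →L[ℝ] X) x₀ - (T₀ : X →L[ℝ] X) x₀) + (T₀ : X →L[ℝ] X) x₀)
      (𝓝 (T₀, x₀)) (𝓝 (0 + 0 + (T₀ : X →L[ℝ] X) x₀)) :=
    (h1.add h2).add tendsto_const_nhds
  have heq : (fun p : K × X =>
      ((p.1 : X →L[ℝ] X) p.2 - (p.1 : X →L[ℝ] X) x₀) +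
        ((p.1 : X →L[ℝ] X) x₀ - (T₀ : X →L[ℝ] X) x₀) + (T₀ : X →L[ℝ] X) x₀)
      = fun p : K × X => (p.1 : X →L[ℝ] X) p.2 := by
    funext p; abel
  rw [heq] at h3
  have h4 : Tendsto (fun p : K × X => (p.1 : X →L[ℝ] X) p.2) (𝓝 (T₀, x₀))
      (𝓝 ((T₀ : X →L[ℝ] X) x₀)) := by simpa only [zero_add] using h3
  exact h4

theorem aux_powCont {K : Set (X →L[ℝ] X)}
    (hK : Continuous fun p : K × X => (p.1 : X →L[ℝ] X) p.2) (n : ℕ) :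
    Continuous fun p : K × X => ((p.1 : X →L[ℝ] X) ^ n) p.2 := by
  induction n with
  | zero =>
    simpa [pow_zero, ContinuousLinearMap.one_apply] using
      (continuous_snd : Continuous fun p : K × X => p.2)
  | succ n ih =>
    have heq : ∀ p : K × X,
        ((p.1 : X →L[ℝ] X) ^ (n + 1)) p.2
          = (p.1 : X →L[ℝ] X) (((p.1 : X →L[ℝ] X) ^ n) p.2) := by
      intro p
      rw [pow_succ']
      rfl
    simp only [heq]
    exact hK.comp (continuous_fst.prodMk ih)

theorem aux_isOpen {K : Set (X →L[ℝ] X)} (hKc : IsCompact K)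
    (hK : Equicontinuous fun T : K => ⇑(T : X →L[ℝ] X)) {U : Set X} (hU : IsOpen U) :
    IsOpen {x : X | ∀ T ∈ K, ∃ n : ℕ, (T ^ (n + 1)) x ∈ U} := by
  rw [isOpen_iff_mem_nhds]
  intro x₀ hx₀
  haveI : CompactSpace K := isCompact_iff_compactSpace.mp hKc
  have hev := aux_evalCont hK
  have key : ∀ᶠ x in 𝓝 x₀, ∀ T ∈ (Set.univ : Set K),
      ∃ n : ℕ, ((T : X →L[ℝ] X) ^ (n + 1)) x ∈ U := by
    refine isCompact_univ.eventually_forall_of_forall_eventually fun T _ => ?_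
    obtain ⟨n, hn⟩ := hx₀ (T : X →L[ℝ] X) T.2
    have hc : Continuous fun z : X × K => ((z.2 : X →L[ℝ] X) ^ (n + 1)) z.1 :=
      (aux_powCont hev (n + 1)).comp continuous_swap
    have hopen : IsOpen {z : X × K | ((z.2 : X →L[ℝ] X) ^ (n + 1)) z.1 ∈ U} :=
      hU.preimage hc
    have hmem : ((x₀, T) : X × K) ∈ {z : X × K | ((z.2 : X →L[ℝ] X) ^ (n + 1)) z.1 ∈ U} := hn
    exact (hopen.eventually_mem hmem).mono fun z hz => ⟨n, hz⟩
  exact key.mono fun x hx T hT => hx ⟨T, hT⟩ (Set.mem_univ _)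

end Aux2

end AuxHC

/-- The set of hypercyclic vectors of a continuous linear operator `T`:
those `x` whose orbit `{Tⁿ x : n ≥ 1}` is dense. -/
def hypercyclicVectors {X : Type*} [AddCommGroup X] [Module ℝ X] [TopologicalSpace X]
    (T : X →L[ℝ] X) : Set X :=
  {x : X | Dense (Set.range fun n : ℕ => (T ^ (n + 1)) x)}

/-- Let `X` be a separable F-space and `A ⊆ L(X)` such that:
(1) `A` is a countable union of compact sets (for the strong topology on `L(X)`);
(2) `⋂_{T ∈ A} HC(T)` is nonempty;
(3) some `S ∈ A` commutes with every `T ∈ A`.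
Then `⋂_{T ∈ A} HC(T)` is residual in `X`, namely it is a dense Gδ set. -/
theorem residual_common_hypercyclic
    {X : Type*} [AddCommGroup X] [Module ℝ X] [UniformSpace X]
    [IsUniformAddGroup X] [ContinuousSMul ℝ X] [CompleteSpace X]
    [TopologicalSpace.MetrizableSpace X] [TopologicalSpace.SeparableSpace X]
    (A : Set (X →L[ℝ] X))
    (hA : ∃ K : ℕ → Set (X →L[ℝ] X), (∀ p, IsCompact (K p)) ∧ A = ⋃ p, K p)
    (hne : (⋂ T ∈ A, hypercyclicVectors T).Nonempty)
    (hcomm : ∃ S ∈ A, ∀ T ∈ A, S * T = T * S) :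
    Dense (⋂ T ∈ A, hypercyclicVectors T) ∧ IsGδ (⋂ T ∈ A, hypercyclicVectors T) := by
  classical
  haveI : (𝓤 X).IsCountablyGenerated := IsUniformAddGroup.uniformity_countably_generated
  haveI : SecondCountableTopology X := UniformSpace.secondCountable_of_separable X
  obtain ⟨x, hx⟩ := hne
  obtain ⟨S, hSA, hSc⟩ := hcomm
  obtain ⟨K, hKcomp, rfl⟩ := hA
  constructor
  · -- Density
    have hxT : ∀ T ∈ ⋃ p, K p, x ∈ hypercyclicVectors T := fun T hT =>
      Set.mem_iInter₂.1 hx T hT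
    have hxS : x ∈ hypercyclicVectors S := hxT S hSA
    have hxSd : Dense (Set.range fun n : ℕ => (S ^ (n + 1)) x) := hxS
    have hSd : DenseRange (⇑S) := by
      have hsub : (Set.range fun n : ℕ => (S ^ (n + 1)) x) ⊆ Set.range ⇑S := by
        rintro _ ⟨n, rfl⟩
        exact ⟨(S ^ n) x, by show S ((S ^ n) x) = (S ^ (n + 1)) x; rw [pow_succ']; rfl⟩
      exact hxSd.mono hsub
    have hSkd : ∀ k : ℕ, DenseRange ⇑(S ^ k) := by
      intro k
      induction k with
      | zero =>
        have : ⇑(S ^ 0) = (id : X → X) := by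
          funext y; simp [pow_zero]
        rw [this]
        exact denseRange_id
      | succ k ih =>
        have : ⇑(S ^ (k + 1)) = ⇑(S ^ k) ∘ ⇑S := by
          rw [pow_succ]; rfl
        rw [this]
        exact ih.comp hSd (S ^ k).continuous
    have hsub : (Set.range fun k : ℕ => (S ^ (k + 1)) x)
        ⊆ ⋂ T ∈ ⋃ p, K p, hypercyclicVectors T := by
      rintro _ ⟨k, rfl⟩
      refine Set.mem_iInter₂.2 fun T hT => ?_
      have hcomm' : ∀ n : ℕ, (T ^ (n + 1)) ((S ^ (k + 1)) x) = (S ^ (k + 1)) ((T ^ (n + 1)) x) := by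
        intro n
        have h2 : S ^ (k + 1) * T ^ (n + 1) = T ^ (n + 1) * S ^ (k + 1) :=
          Commute.pow_pow (hSc T hT) (k + 1) (n + 1)
        rw [← ContinuousLinearMap.mul_apply, ← h2, ContinuousLinearMap.mul_apply]
      show Dense (Set.range fun n : ℕ => (T ^ (n + 1)) ((S ^ (k + 1)) x))
      rw [show (fun n : ℕ => (T ^ (n + 1)) ((S ^ (k + 1)) x))
          = (⇑(S ^ (k + 1)) ∘ fun n : ℕ => (T ^ (n + 1)) x) from funext fun n => hcomm' n,
        Set.range_comp]
      exact (hSkd (k + 1)).dense_image (S ^ (k + 1)).continuous (hxT T hT)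
    exact hxSd.mono hsub
  · -- Gδ
    obtain ⟨B, hBc, hBne, hBbasis⟩ := TopologicalSpace.exists_countable_basis X
    have hEq : ∀ p, Equicontinuous fun T : K p => ⇑(T : X →L[ℝ] X) := by
      intro p
      apply aux_equicontinuous
      intro y
      have h1 : IsCompact ((fun T : X →L[ℝ] X => T y) '' K p) :=
        (hKcomp p).image (continuous_eval_const y)
      have h2 := h1.totallyBounded.isVonNBounded ℝ
      rwa [Set.image_eq_range] at h2
    have hset : (⋂ T ∈ ⋃ p, K p, hypercyclicVectors T)
        = ⋂ p, ⋂ U ∈ {U ∈ B | U.Nonempty},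
            {x : X | ∀ T ∈ K p, ∃ n : ℕ, (T ^ (n + 1)) x ∈ U} := by
      ext y
      simp only [Set.mem_iInter, Set.mem_setOf_eq, Set.mem_sep_iff, and_imp]
      constructor
      · intro h p U hUB hUne T hT
        have hy : Dense (Set.range fun n : ℕ => (T ^ (n + 1)) y) :=
          h T (Set.mem_iUnion.2 ⟨p, hT⟩)
        obtain ⟨z, hzU, n, rfl⟩ := hBbasis.dense_iff.1 hy U hUB hUne
        exact ⟨n, hzU⟩
      · intro h T hT
        obtain ⟨p, hp⟩ := Set.mem_iUnion.1 hT
        show Dense (Set.range fun n : ℕ => (T ^ (n + 1)) y)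
        refine hBbasis.dense_iff.2 fun U hUB hUne => ?_
        obtain ⟨n, hn⟩ := h p U hUB hUne T hp
        exact ⟨(T ^ (n + 1)) y, hn, ⟨n, rfl⟩⟩
    rw [hset]
    refine IsGδ.iInter fun p => IsGδ.biInter (hBc.mono (Set.sep_subset _ _)) fun U hU => ?_
    exact (aux_isOpen (hKcomp p) (hEq p) (hBbasis.isOpen hU.1)).isGδ
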